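/- Consider the HSA dynamo system ẋ = x(y-1) - βz, ẏ = α(1-x²) - κy, ż = x - λz with β = κ = 0 and α ≠ 0. Then the function F₁(x,y,z) = α·ln(x) - α·x²/2 - y²/2 + y is a first integral of the system on the region x > 0, i.e., the derivative of F₁ along the vector field X = x(y-1)∂ₓ + α(1-x²)∂_y + (x-λz)∂_z vanishes identically on {x > 0}. -/

import Mathlib

/-- For the HSA dynamo with β = κ = 0 and α ≠ 0, the function
F₁(x,y,z) = α ln x - α x²/2 - y²/2 + y is a first integral on {x > 0}:
the derivative of F₁ along X = x(y-1)∂ₓ + α(1-x²)∂_y + (x-λz)∂_z vanishes. -/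
theorem stmt_0 (α lam : ℝ) (hα : α ≠ 0) (x y z : ℝ) (hx : 0 < x) :
    (x * (y - 1)) *
        deriv (fun x' : ℝ => α * Real.log x' - α * x' ^ 2 / 2 - y ^ 2 / 2 + y) x
      + (α * (1 - x ^ 2)) *
        deriv (fun y' : ℝ => α * Real.log x - α * x ^ 2 / 2 - y' ^ 2 / 2 + y') y
      + (x - lam * z) *
        deriv (fun _z' : ℝ => α * Real.log x - α * x ^ 2 / 2 - y ^ 2 / 2 + y) z = 0 := by
  have hx0 : x ≠ 0 := ne_of_gt hx
  have h1 : deriv (fun x' : ℝ => α * Real.log x' - α * x' ^ 2 / 2 - y ^ 2 / 2 + y) x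
      = α * x⁻¹ - α * (2 * x) / 2 := by
    have hd1 : HasDerivAt (fun x' : ℝ => Real.log x') x⁻¹ x := Real.hasDerivAt_log hx0
    have hd2 : HasDerivAt (fun x' : ℝ => x' ^ 2) (2 * x) x := by
      simpa using (hasDerivAt_pow 2 x)
    have : HasDerivAt (fun x' : ℝ => α * Real.log x' - α * x' ^ 2 / 2 - y ^ 2 / 2 + y)
        (α * x⁻¹ - α * (2 * x) / 2) x := by
      have := (((hd1.const_mul α).sub ((hd2.const_mul α).div_const 2)).sub_const
        (y ^ 2 / 2)).add_const y
      simpa using this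
    exact this.deriv
  have h2 : deriv (fun y' : ℝ => α * Real.log x - α * x ^ 2 / 2 - y' ^ 2 / 2 + y') y
      = -(2 * y) / 2 + 1 := by
    have hd2 : HasDerivAt (fun y' : ℝ => y' ^ 2) (2 * y) y := by
      simpa using (hasDerivAt_pow 2 y)
    have : HasDerivAt (fun y' : ℝ => α * Real.log x - α * x ^ 2 / 2 - y' ^ 2 / 2 + y')
        (-(2 * y) / 2 + 1) y := by
      have := ((((hasDerivAt_const y (α * Real.log x)).sub
        (hasDerivAt_const y (α * x ^ 2 / 2))).sub (hd2.div_const 2)).add (hasDerivAt_id y))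
      simpa [neg_div, Pi.sub_def, Pi.add_def] using this
    exact this.deriv
  have h3 : deriv (fun _z' : ℝ => α * Real.log x - α * x ^ 2 / 2 - y ^ 2 / 2 + y) z = 0 :=
    deriv_const _ _
  rw [h1, h2, h3]
  field_simp
  ring
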